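/- Let (X, μ) be a measure space and h, g : X → [0,∞) measurable functions with finite distribution functions H(y) := μ{x : h(x) > y} and G(y) := μ{x : g(x) > y} for all y > 0. Suppose there exists y₀ > 0 such that G(y) ≤ H(y) for all 0 < y < y₀ and G(y) ≥ H(y) for all y > y₀, and suppose there exists p₀ > 0 with ∫ h^{p₀} dμ = ∫ g^{p₀} dμ (both finite). Then for every p > p₀ for which both integrals ∫ h^p dμ and ∫ g^p dμ are finite, ∫ h^p dμ ≤ ∫ g^p dμ. -/

import Mathlib

open MeasureTheory Set
open scoped ENNReal

lemma np_rearr {a b u v : ℝ≥0∞} (hba : b ≤ a) (huv : u ≤ v) :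
    a * u + b * v ≤ b * u + a * v := by
  conv_lhs => rw [← tsub_add_cancel_of_le huv]
  conv_rhs => rw [← tsub_add_cancel_of_le huv]
  rw [mul_add, mul_add,
    show a*u + (b*(v-u) + b*u) = (a*u + b*u) + b*(v-u) from by ring,
    show b*u + (a*(v-u) + a*u) = (a*u + b*u) + a*(v-u) from by ring]
  exact add_le_add_right (mul_le_mul_left hba _) _

lemma np_aux (Hf Gf : ℝ → ℝ≥0∞) (Hm : Measurable Hf) (Gm : Measurable Gf)
    (y₀ p₀ p : ℝ) (hy₀ : 0 < y₀) (hp₀ : 0 < p₀) (hpp : p₀ < p)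
    (hs₁ : ∀ t ∈ Ioo (0:ℝ) y₀, Gf t ≤ Hf t) (hs₂ : ∀ t ∈ Ioi y₀, Hf t ≤ Gf t)
    (heq : ∫⁻ t in Ioi (0:ℝ), Hf t * ENNReal.ofReal (t ^ (p₀-1))
         = ∫⁻ t in Ioi (0:ℝ), Gf t * ENNReal.ofReal (t ^ (p₀-1)))
    (hfin : ∫⁻ t in Ioi (0:ℝ), Hf t * ENNReal.ofReal (t ^ (p₀-1)) ≠ ⊤) :
    ∫⁻ t in Ioi (0:ℝ), Hf t * ENNReal.ofReal (t ^ (p-1))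
      ≤ ∫⁻ t in Ioi (0:ℝ), Gf t * ENNReal.ofReal (t ^ (p-1)) := by
  have cpm : Measurable fun t : ℝ => ENNReal.ofReal (t ^ (p-1)) := by fun_prop
  have cqm : Measurable fun t : ℝ => ENNReal.ofReal (t ^ (p₀-1)) := by fun_prop
  set c : ℝ≥0∞ := ENNReal.ofReal (y₀ ^ (p - p₀)) with hc
  -- split the three relevant facts at y₀
  have hsplit : ∀ F : ℝ → ℝ≥0∞, ∫⁻ t in Ioi (0:ℝ), F t
      = (∫⁻ t in Ioc (0:ℝ) y₀, F t) + ∫⁻ t in Ioi y₀, F t := fun F => by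
    rw [← Ioc_union_Ioi_eq_Ioi hy₀.le,
      lintegral_union measurableSet_Ioi Ioc_disjoint_Ioi_same]
  rw [hsplit] at heq hfin ⊢
  rw [hsplit (fun t => Gf t * ENNReal.ofReal (t ^ (p₀-1)))] at heq
  rw [hsplit (fun t => Gf t * ENNReal.ofReal (t ^ (p-1)))]
  set a₁ := ∫⁻ t in Ioc (0:ℝ) y₀, Hf t * ENNReal.ofReal (t ^ (p₀-1)) with ha₁
  set a₂ := ∫⁻ t in Ioi y₀, Hf t * ENNReal.ofReal (t ^ (p₀-1)) with ha₂
  set b₁ := ∫⁻ t in Ioc (0:ℝ) y₀, Gf t * ENNReal.ofReal (t ^ (p₀-1)) with hb₁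
  set b₂ := ∫⁻ t in Ioi y₀, Gf t * ENNReal.ofReal (t ^ (p₀-1)) with hb₂
  -- pointwise exponent comparisons
  have key₁ : ∀ t ∈ Ioo (0:ℝ) y₀,
      ENNReal.ofReal (t ^ (p-1)) ≤ c * ENNReal.ofReal (t ^ (p₀-1)) := by
    intro t ht
    rw [hc, ← ENNReal.ofReal_mul (Real.rpow_nonneg hy₀.le _)]
    apply ENNReal.ofReal_le_ofReal
    rw [show p - 1 = (p - p₀) + (p₀ - 1) from by ring, Real.rpow_add ht.1]
    exact mul_le_mul_of_nonneg_right
      (Real.rpow_le_rpow ht.1.le ht.2.le (by linarith)) (Real.rpow_nonneg ht.1.le _)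
  have key₂ : ∀ t ∈ Ioi y₀,
      c * ENNReal.ofReal (t ^ (p₀-1)) ≤ ENNReal.ofReal (t ^ (p-1)) := by
    intro t ht
    have ht0 : (0:ℝ) < t := hy₀.trans ht
    rw [hc, ← ENNReal.ofReal_mul (Real.rpow_nonneg hy₀.le _)]
    apply ENNReal.ofReal_le_ofReal
    rw [show p - 1 = (p - p₀) + (p₀ - 1) from by ring, Real.rpow_add ht0]
    exact mul_le_mul_of_nonneg_right
      (Real.rpow_le_rpow hy₀.le (le_of_lt ht) (by linarith)) (Real.rpow_nonneg ht0.le _)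
  -- the two integral inequalities
  have I₁ : (∫⁻ t in Ioc (0:ℝ) y₀, Hf t * ENNReal.ofReal (t ^ (p-1))) + c * b₁
      ≤ (∫⁻ t in Ioc (0:ℝ) y₀, Gf t * ENNReal.ofReal (t ^ (p-1))) + c * a₁ := by
    have mono : ∫⁻ t in Ioc (0:ℝ) y₀,
          (Hf t * ENNReal.ofReal (t ^ (p-1)) + c * (Gf t * ENNReal.ofReal (t ^ (p₀-1))))
        ≤ ∫⁻ t in Ioc (0:ℝ) y₀,
          (Gf t * ENNReal.ofReal (t ^ (p-1)) + c * (Hf t * ENNReal.ofReal (t ^ (p₀-1)))) := by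
      rw [← restrict_Ioo_eq_restrict_Ioc]
      refine lintegral_mono_ae ?_
      filter_upwards [ae_restrict_mem measurableSet_Ioo] with t ht
      have := np_rearr (hs₁ t ht) (key₁ t ht)
      calc Hf t * ENNReal.ofReal (t ^ (p-1)) + c * (Gf t * ENNReal.ofReal (t ^ (p₀-1)))
          = Hf t * ENNReal.ofReal (t ^ (p-1)) + Gf t * (c * ENNReal.ofReal (t ^ (p₀-1))) := by ring
        _ ≤ Gf t * ENNReal.ofReal (t ^ (p-1)) + Hf t * (c * ENNReal.ofReal (t ^ (p₀-1))) := this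
        _ = Gf t * ENNReal.ofReal (t ^ (p-1)) + c * (Hf t * ENNReal.ofReal (t ^ (p₀-1))) := by ring
    rwa [lintegral_add_left (f := fun t => Hf t * ENNReal.ofReal (t ^ (p-1))) (Hm.mul cpm), lintegral_add_left (f := fun t => Gf t * ENNReal.ofReal (t ^ (p-1))) (Gm.mul cpm),
      lintegral_const_mul c (f := fun t => Gf t * ENNReal.ofReal (t ^ (p₀-1))) (Gm.mul cqm), lintegral_const_mul c (f := fun t => Hf t * ENNReal.ofReal (t ^ (p₀-1))) (Hm.mul cqm)] at mono
  have I₂ : c * b₂ + (∫⁻ t in Ioi y₀, Hf t * ENNReal.ofReal (t ^ (p-1)))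
      ≤ c * a₂ + (∫⁻ t in Ioi y₀, Gf t * ENNReal.ofReal (t ^ (p-1))) := by
    have mono : ∫⁻ t in Ioi y₀,
          (c * (Gf t * ENNReal.ofReal (t ^ (p₀-1))) + Hf t * ENNReal.ofReal (t ^ (p-1)))
        ≤ ∫⁻ t in Ioi y₀,
          (c * (Hf t * ENNReal.ofReal (t ^ (p₀-1))) + Gf t * ENNReal.ofReal (t ^ (p-1))) := by
      refine lintegral_mono_ae ?_
      filter_upwards [ae_restrict_mem measurableSet_Ioi] with t ht
      have := np_rearr (hs₂ t ht) (key₂ t ht)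
      calc c * (Gf t * ENNReal.ofReal (t ^ (p₀-1))) + Hf t * ENNReal.ofReal (t ^ (p-1))
          = Gf t * (c * ENNReal.ofReal (t ^ (p₀-1))) + Hf t * ENNReal.ofReal (t ^ (p-1)) := by ring
        _ ≤ Hf t * (c * ENNReal.ofReal (t ^ (p₀-1))) + Gf t * ENNReal.ofReal (t ^ (p-1)) := this
        _ = c * (Hf t * ENNReal.ofReal (t ^ (p₀-1))) + Gf t * ENNReal.ofReal (t ^ (p-1)) := by ring
    rwa [lintegral_add_left (f := fun t => c * (Gf t * ENNReal.ofReal (t ^ (p₀-1)))) ((measurable_const.mul (Gm.mul cqm))),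
      lintegral_add_left (f := fun t => c * (Hf t * ENNReal.ofReal (t ^ (p₀-1)))) ((measurable_const.mul (Hm.mul cqm))),
      lintegral_const_mul c (f := fun t => Gf t * ENNReal.ofReal (t ^ (p₀-1))) (Gm.mul cqm), lintegral_const_mul c (f := fun t => Hf t * ENNReal.ofReal (t ^ (p₀-1))) (Hm.mul cqm)] at mono
  have sum := add_le_add I₁ I₂
  rw [show (∫⁻ t in Ioc (0:ℝ) y₀, Hf t * ENNReal.ofReal (t ^ (p-1))) + c * b₁
        + (c * b₂ + ∫⁻ t in Ioi y₀, Hf t * ENNReal.ofReal (t ^ (p-1)))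
      = ((∫⁻ t in Ioc (0:ℝ) y₀, Hf t * ENNReal.ofReal (t ^ (p-1)))
        + ∫⁻ t in Ioi y₀, Hf t * ENNReal.ofReal (t ^ (p-1))) + c * (b₁ + b₂) from by ring,
    show (∫⁻ t in Ioc (0:ℝ) y₀, Gf t * ENNReal.ofReal (t ^ (p-1))) + c * a₁
        + (c * a₂ + ∫⁻ t in Ioi y₀, Gf t * ENNReal.ofReal (t ^ (p-1)))
      = ((∫⁻ t in Ioc (0:ℝ) y₀, Gf t * ENNReal.ofReal (t ^ (p-1)))
        + ∫⁻ t in Ioi y₀, Gf t * ENNReal.ofReal (t ^ (p-1))) + c * (a₁ + a₂) from by ring,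
    ← heq] at sum
  exact (ENNReal.add_le_add_iff_right (ENNReal.mul_ne_top ENNReal.ofReal_ne_top hfin)).1 sum

/-- The Nazarov–Podkorytov lemma. -/
theorem nazarov_podkorytov {X : Type*} [MeasurableSpace X] (μ : Measure X)
    (h g : X → ℝ) (hh : Measurable h) (hg : Measurable g)
    (h0 : ∀ x, 0 ≤ h x) (g0 : ∀ x, 0 ≤ g x)
    (Hfin : ∀ y : ℝ, 0 < y → μ {x | h x > y} < ⊤)
    (Gfin : ∀ y : ℝ, 0 < y → μ {x | g x > y} < ⊤)
    (y₀ : ℝ) (hy₀ : 0 < y₀)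
    (hsign₁ : ∀ y : ℝ, 0 < y → y < y₀ → μ {x | g x > y} ≤ μ {x | h x > y})
    (hsign₂ : ∀ y : ℝ, y₀ < y → μ {x | h x > y} ≤ μ {x | g x > y})
    (p₀ : ℝ) (hp₀ : 0 < p₀)
    (heq : ∫⁻ x, ENNReal.ofReal (h x ^ p₀) ∂μ = ∫⁻ x, ENNReal.ofReal (g x ^ p₀) ∂μ)
    (hfin₀ : ∫⁻ x, ENNReal.ofReal (h x ^ p₀) ∂μ < ⊤) :
    ∀ p : ℝ, p₀ < p →
      ∫⁻ x, ENNReal.ofReal (h x ^ p) ∂μ < ⊤ →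
      ∫⁻ x, ENNReal.ofReal (g x ^ p) ∂μ < ⊤ →
      ∫⁻ x, ENNReal.ofReal (h x ^ p) ∂μ ≤ ∫⁻ x, ENNReal.ofReal (g x ^ p) ∂μ := by
  intro p hpp _ _
  have hp : 0 < p := hp₀.trans hpp
  have h0' : 0 ≤ᵐ[μ] h := Filter.Eventually.of_forall h0
  have g0' : 0 ≤ᵐ[μ] g := Filter.Eventually.of_forall g0
  have LChp := lintegral_rpow_eq_lintegral_meas_lt_mul μ h0' hh.aemeasurable hp
  have LCgp := lintegral_rpow_eq_lintegral_meas_lt_mul μ g0' hg.aemeasurable hp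
  have LChq := lintegral_rpow_eq_lintegral_meas_lt_mul μ h0' hh.aemeasurable hp₀
  have LCgq := lintegral_rpow_eq_lintegral_meas_lt_mul μ g0' hg.aemeasurable hp₀
  have hq0 : ENNReal.ofReal p₀ ≠ 0 := by
    simpa [ENNReal.ofReal_eq_zero, not_le] using hp₀
  have heq' : ∫⁻ t in Ioi (0:ℝ), μ {a | t < h a} * ENNReal.ofReal (t ^ (p₀-1))
      = ∫⁻ t in Ioi (0:ℝ), μ {a | t < g a} * ENNReal.ofReal (t ^ (p₀-1)) := by
    rw [LChq, LCgq] at heq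
    exact (ENNReal.mul_right_inj hq0 ENNReal.ofReal_ne_top).1 heq
  have hfin' : ∫⁻ t in Ioi (0:ℝ), μ {a | t < h a} * ENNReal.ofReal (t ^ (p₀-1)) ≠ ⊤ := by
    rw [LChq] at hfin₀
    exact (ENNReal.lt_top_of_mul_ne_top_right hfin₀.ne hq0).ne
  rw [LChp, LCgp]
  refine mul_le_mul_right ?_ _
  exact np_aux (fun t => μ {a | t < h a}) (fun t => μ {a | t < g a})
    (Antitone.measurable fun s t hst => measure_mono fun x hx => lt_of_le_of_lt hst hx)
    (Antitone.measurable fun s t hst => measure_mono fun x hx => lt_of_le_of_lt hst hx)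
    y₀ p₀ p hy₀ hp₀ hpp
    (fun t ht => hsign₁ t ht.1 ht.2) (fun t ht => hsign₂ t ht)
    heq' hfin'
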